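/- Let Z be a chi-squared random variable with d degrees of freedom (sum of squares of d i.i.d. standard Gaussians). Then for every t > 0, Pr( Z ≥ d + 2√(dt) + 2t ) ≤ e^{−t}. -/

import Mathlib

open Finset MeasureTheory ProbabilityTheory
open Real
open scoped NNReal ENNReal

lemma lm_pdf_mul {l : ℝ} (hl : l < 1/2) (x : ℝ) :
    gaussianPDFReal 0 1 x * Real.exp (l * x ^ 2)
      = (Real.sqrt (2 * π))⁻¹ * Real.exp (-(1/2 - l) * x ^ 2) := by
  simp only [gaussianPDFReal, NNReal.coe_one, mul_one, sub_zero]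
  rw [mul_assoc, ← Real.exp_add]
  ring_nf

lemma lm_integrable {l : ℝ} (hl : l < 1/2) :
    Integrable (fun x => Real.exp (l * x ^ 2)) (gaussianReal 0 1) := by
  rw [gaussianReal_of_var_ne_zero _ one_ne_zero]
  rw [integrable_withDensity_iff (measurable_gaussianPDF 0 1)
    (ae_of_all _ fun x => ENNReal.ofReal_lt_top)]
  have : (fun x => Real.exp (l * x ^ 2) * (gaussianPDF 0 1 x).toReal)
      = fun x => (Real.sqrt (2 * π))⁻¹ * Real.exp (-(1/2 - l) * x ^ 2) := by
    funext x
    rw [gaussianPDF, ENNReal.toReal_ofReal (gaussianPDFReal_nonneg 0 1 x), mul_comm,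
      lm_pdf_mul hl]
  rw [this]
  exact (integrable_exp_neg_mul_sq (by linarith)).const_mul _

lemma lm_integral {l : ℝ} (hl : l < 1/2) :
    ∫ x, Real.exp (l * x ^ 2) ∂(gaussianReal 0 1) = (Real.sqrt (1 - 2 * l))⁻¹ := by
  rw [gaussianReal_of_var_ne_zero _ one_ne_zero]
  have hpdf : gaussianPDF 0 1 = fun x =>
      ((Real.toNNReal (gaussianPDFReal 0 1 x) : ℝ≥0) : ℝ≥0∞) := rfl
  rw [hpdf, integral_withDensity_eq_integral_smul
    ((measurable_gaussianPDFReal 0 1).real_toNNReal)]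
  have : (fun x => Real.toNNReal (gaussianPDFReal 0 1 x) • Real.exp (l * x ^ 2))
      = fun x => (Real.sqrt (2 * π))⁻¹ * Real.exp (-(1/2 - l) * x ^ 2) := by
    funext x
    rw [NNReal.smul_def, smul_eq_mul, Real.coe_toNNReal _ (gaussianPDFReal_nonneg 0 1 x),
      lm_pdf_mul hl]
  rw [this, integral_const_mul, integral_gaussian]
  have h2 : (0:ℝ) < 1/2 - l := by linarith
  have h12 : 1 - 2*l = 2*(1/2 - l) := by ring
  rw [h12, Real.sqrt_div pi_pos.le, Real.sqrt_mul (by norm_num : (0:ℝ) ≤ 2) π,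
    Real.sqrt_mul (by norm_num : (0:ℝ) ≤ 2) (1/2 - l)]
  have hπ : Real.sqrt π ≠ 0 := by positivity
  have h2' : Real.sqrt (1/2 - l) ≠ 0 := by positivity
  have h2'' : Real.sqrt 2 ≠ 0 := by positivity
  field_simp

lemma lm_pi_integrable (d : ℕ) {l : ℝ} (hl : l < 1/2) :
    Integrable (fun g : Fin d → ℝ => Real.exp (l * ∑ i, g i ^ 2))
      (Measure.pi fun _ : Fin d => gaussianReal 0 1) := by
  letI : MeasureSpace ℝ := ⟨gaussianReal 0 1⟩
  haveI : SigmaFinite (volume : Measure ℝ) :=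
    inferInstanceAs (SigmaFinite (gaussianReal 0 1))
  have h : (fun g : Fin d → ℝ => Real.exp (l * ∑ i, g i ^ 2))
      = fun g => ∏ i, Real.exp (l * g i ^ 2) := by
    funext g; rw [mul_sum, Real.exp_sum]
  rw [h]
  exact Integrable.fintype_prod (f := fun _ x => Real.exp (l * x ^ 2))
    (fun _ => lm_integrable hl)

lemma lm_pi_integral (d : ℕ) {l : ℝ} (hl : l < 1/2) :
    ∫ g : Fin d → ℝ, Real.exp (l * ∑ i, g i ^ 2)
        ∂(Measure.pi fun _ : Fin d => gaussianReal 0 1)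
      = ((Real.sqrt (1 - 2 * l))⁻¹) ^ d := by
  letI : MeasureSpace ℝ := ⟨gaussianReal 0 1⟩
  haveI : SigmaFinite (volume : Measure ℝ) :=
    inferInstanceAs (SigmaFinite (gaussianReal 0 1))
  have h : (fun g : Fin d → ℝ => Real.exp (l * ∑ i, g i ^ 2))
      = fun g => ∏ i, Real.exp (l * g i ^ 2) := by
    funext g; rw [mul_sum, Real.exp_sum]
  rw [h]
  have := integral_fintype_prod_volume_eq_pow (ι := Fin d) (fun x => Real.exp (l * x ^ 2))
  simp only [Fintype.card_fin] at this
  rw [show (Measure.pi fun _ : Fin d => gaussianReal 0 1) = volume from rfl, this,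
    show (∫ x, Real.exp (l * x ^ 2)) = (Real.sqrt (1 - 2 * l))⁻¹ from lm_integral hl]


/-- Laurent–Massart: if `Z = Σ_{i<d} gᵢ²` for i.i.d. standard
Gaussians, then `Pr(Z ≥ d + 2√(dt) + 2t) ≤ e^{−t}` for every `t > 0`. -/
theorem stmt13 (d : ℕ) :
    ∀ t : ℝ, 0 < t →
      (Measure.pi fun _ : Fin d => gaussianReal 0 1)
        {g : Fin d → ℝ |
          (d : ℝ) + 2 * Real.sqrt (d * t) + 2 * t ≤ ∑ i : Fin d, g i ^ 2} ≤
        ENNReal.ofReal (Real.exp (-t)) := by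
  intro t ht
  rcases Nat.eq_zero_or_pos d with hd | hd
  · subst hd
    have he : {g : Fin 0 → ℝ |
        (0 : ℕ) + 2 * Real.sqrt ((0:ℕ) * t) + 2 * t ≤ ∑ i : Fin 0, g i ^ 2} = ∅ := by
      ext g
      simp only [Set.mem_setOf_eq, Set.mem_empty_iff_false, iff_false, not_le,
        Finset.univ_eq_empty, Finset.sum_empty, Nat.cast_zero, zero_mul,
        Real.sqrt_zero, mul_zero]
      linarith
    rw [he]
    simp
  · have hd' : (0:ℝ) < d := by exact_mod_cast hd
    set μ := Measure.pi fun _ : Fin d => gaussianReal 0 1 with hμ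
    set a := (d : ℝ) + 2 * Real.sqrt (d * t) + 2 * t with ha_def
    have hsq : 0 ≤ Real.sqrt (d * t) := Real.sqrt_nonneg _
    have had : (d:ℝ) < a := by simp only [ha_def]; linarith
    have ha : (0:ℝ) < a := lt_trans hd' had
    set l := (a - d) / (2 * a) with hl_def
    have hl0 : 0 ≤ l := div_nonneg (by linarith) (by positivity)
    have hl : l < 1/2 := by
      rw [hl_def, div_lt_iff₀ (by positivity)]
      linarith
    have h1l : 1 - 2 * l = d / a := by
      rw [hl_def]; field_simp; ring
    have hch := measure_ge_le_exp_mul_mgf (μ := μ)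
      (X := fun g : Fin d → ℝ => ∑ i, g i ^ 2) a hl0 (lm_pi_integrable d hl)
    rw [mgf] at hch
    rw [show (μ[fun ω : Fin d → ℝ => Real.exp (l * ∑ i, ω i ^ 2)])
        = ((Real.sqrt (1 - 2 * l))⁻¹) ^ d from lm_pi_integral d hl] at hch
    -- the real-number estimate
    set s := Real.sqrt (t / d) with hs_def
    have hs0 : 0 ≤ s := Real.sqrt_nonneg _
    have hs2 : s ^ 2 = t / d := Real.sq_sqrt (by positivity)
    have hds : Real.sqrt ((d:ℝ) * t) = d * s := by
      rw [show (d:ℝ) * t = (d:ℝ)^2 * (t / d) by field_simp,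
        Real.sqrt_mul (by positivity), Real.sqrt_sq hd'.le, hs_def]
    have had2 : a / d = 1 + 2 * s + (2*s)^2/2 := by
      have htd : t = d * s ^ 2 := by rw [hs2]; field_simp
      rw [ha_def, hds]
      field_simp
      linear_combination 2 * htd
    have key2 : a / d ≤ Real.exp (2 * s) := by
      rw [had2]
      exact Real.quadratic_le_exp_of_nonneg (by positivity)
    have key3 : (Real.sqrt (1 - 2 * l))⁻¹ ≤ Real.exp s := by
      rw [h1l, ← Real.sqrt_inv, inv_div]
      calc Real.sqrt (a / d) ≤ Real.sqrt (Real.exp (2 * s)) := Real.sqrt_le_sqrt key2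
        _ = Real.exp s := by
            rw [show Real.exp (2*s) = (Real.exp s)^2 by rw [sq, ← Real.exp_add]; ring_nf,
              Real.sqrt_sq (Real.exp_nonneg s)]
    have hla : l * a = Real.sqrt ((d:ℝ) * t) + t := by
      rw [hl_def, ha_def]
      field_simp
      ring
    have hfinal : Real.exp (-l * a) * ((Real.sqrt (1 - 2 * l))⁻¹) ^ d ≤ Real.exp (-t) := by
      calc Real.exp (-l * a) * ((Real.sqrt (1 - 2 * l))⁻¹) ^ d
          ≤ Real.exp (-l * a) * (Real.exp s) ^ d := by
            refine mul_le_mul_of_nonneg_left ?_ (Real.exp_nonneg _)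
            exact pow_le_pow_left₀ (by positivity) key3 d
        _ = Real.exp (-t) := by
            rw [← Real.exp_nat_mul, ← Real.exp_add]
            congr 1
            rw [neg_mul, hla]
            have : (d:ℝ) * s = Real.sqrt ((d:ℝ) * t) := hds.symm
            linarith
    calc μ {g : Fin d → ℝ | a ≤ ∑ i, g i ^ 2}
        = ENNReal.ofReal (μ {g : Fin d → ℝ | a ≤ ∑ i, g i ^ 2}).toReal :=
          (ENNReal.ofReal_toReal (measure_ne_top μ _)).symm
      _ ≤ ENNReal.ofReal (Real.exp (-t)) :=
          ENNReal.ofReal_le_ofReal (le_trans hch hfinal)
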